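/- Let α > 0 and define p : ℝ → ℝ by p(x) = (1/(2α))·e^{−|x|/α}. Let f : ℝ → ℝ be continuous with compact support, and define v : ℝ → ℝ by the convolution v(x) = ∫_ℝ p(x−y) f(y) dy. Then v is twice differentiable on ℝ and v(x) − α² v''(x) = f(x) for every x ∈ ℝ; equivalently, v'' = α^{−2}(v − f), i.e. (p ⋆ f)'' = α^{−2}(p ⋆ f − f). In other words, p is a fundamental solution of the operator 1 − α²∂ₓ². -/

import Mathlib

open MeasureTheory

theorem fundamental_solution_one_sub_alpha_sq_laplacian
    (α : ℝ) (hα : 0 < α)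
    (p : ℝ → ℝ) (hp : ∀ x : ℝ, p x = (1 / (2 * α)) * Real.exp (-|x| / α))
    (f : ℝ → ℝ) (hf : Continuous f) (hsupp : HasCompactSupport f)
    (v : ℝ → ℝ) (hv : ∀ x : ℝ, v x = ∫ y : ℝ, p (x - y) * f y) :
    (∀ x : ℝ, DifferentiableAt ℝ v x) ∧
    (∀ x : ℝ, DifferentiableAt ℝ (deriv v) x) ∧
    (∀ x : ℝ, v x - α ^ 2 * deriv (deriv v) x = f x) ∧
    (∀ x : ℝ, deriv (deriv v) x = α⁻¹ ^ 2 * (v x - f x)) := by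
  have hα' : α ≠ 0 := hα.ne'
  set g₁ : ℝ → ℝ := fun y => Real.exp (y / α) * f y with hg₁
  set g₂ : ℝ → ℝ := fun y => Real.exp (-y / α) * f y with hg₂
  have hg₁c : Continuous g₁ := (Real.continuous_exp.comp (continuous_id.div_const α)).mul hf
  have hg₂c : Continuous g₂ := (Real.continuous_exp.comp (continuous_id.neg.div_const α)).mul hf
  have hg₁s : HasCompactSupport g₁ := hsupp.mul_left
  have hg₂s : HasCompactSupport g₂ := hsupp.mul_left
  have hg₁i : Integrable g₁ := hg₁c.integrable_of_hasCompactSupport hg₁s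
  have hg₂i : Integrable g₂ := hg₂c.integrable_of_hasCompactSupport hg₂s
  set A : ℝ → ℝ := fun x => ∫ y in Set.Iic x, g₁ y with hA
  set B : ℝ → ℝ := fun x => ∫ y in Set.Ioi x, g₂ y with hB
  have hAd : ∀ x : ℝ, HasDerivAt A (g₁ x) x := by
    intro x
    have h1 : ∀ z : ℝ, A z = (∫ y in Set.Iic (0:ℝ), g₁ y) + ∫ y in (0:ℝ)..z, g₁ y := by
      intro z
      rw [← intervalIntegral.integral_Iic_sub_Iic hg₁i.integrableOn hg₁i.integrableOn]
      ring
    have h2 : HasDerivAt (fun z => (∫ y in Set.Iic (0:ℝ), g₁ y) + ∫ y in (0:ℝ)..z, g₁ y)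
        (g₁ x) x := by
      have := intervalIntegral.integral_hasDerivAt_right
        (hg₁i.intervalIntegrable (a := 0) (b := x))
        hg₁c.aestronglyMeasurable.stronglyMeasurableAtFilter hg₁c.continuousAt
      simpa using this.const_add (∫ y in Set.Iic (0:ℝ), g₁ y)
    exact h2.congr_of_eventuallyEq (Filter.Eventually.of_forall h1)
  have hBd : ∀ x : ℝ, HasDerivAt B (-g₂ x) x := by
    intro x
    have h1 : ∀ z : ℝ, B z = (∫ y, g₂ y) - ((∫ y in Set.Iic (0:ℝ), g₂ y) + ∫ y in (0:ℝ)..z, g₂ y) := by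
      intro z
      rw [← intervalIntegral.integral_Iic_sub_Iic hg₂i.integrableOn hg₂i.integrableOn,
        ← intervalIntegral.integral_Iic_add_Ioi (hg₂i.integrableOn) (hg₂i.integrableOn) (b := z)]
      ring
    have h2 : HasDerivAt (fun z => (∫ y, g₂ y) - ((∫ y in Set.Iic (0:ℝ), g₂ y) + ∫ y in (0:ℝ)..z, g₂ y))
        (-g₂ x) x := by
      have := intervalIntegral.integral_hasDerivAt_right
        (hg₂i.intervalIntegrable (a := 0) (b := x))
        hg₂c.aestronglyMeasurable.stronglyMeasurableAtFilter hg₂c.continuousAt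
      simpa using ((this.const_add (∫ y in Set.Iic (0:ℝ), g₂ y)).const_sub (∫ y, g₂ y))
    exact h2.congr_of_eventuallyEq (Filter.Eventually.of_forall h1)
  -- explicit formula for v
  have hveq : ∀ x : ℝ, v x =
      (1 / (2 * α)) * (Real.exp (-x / α) * A x + Real.exp (x / α) * B x) := by
    intro x
    have hsplit : (∫ y : ℝ, p (x - y) * f y) =
        (∫ y in Set.Iic x, p (x - y) * f y) + ∫ y in Set.Ioi x, p (x - y) * f y := by
      have hi : Integrable (fun y => p (x - y) * f y) := by
        have hpc : Continuous p := by
          have : p = fun z => (1 / (2 * α)) * Real.exp (-|z| / α) := funext hp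
          rw [this]
          exact continuous_const.mul (Real.continuous_exp.comp ((continuous_abs.neg).div_const α))
        exact ((hpc.comp (continuous_const.sub continuous_id)).mul hf).integrable_of_hasCompactSupport
          hsupp.mul_left
      rw [← intervalIntegral.integral_Iic_add_Ioi hi.integrableOn hi.integrableOn]
    have h₁ : (∫ y in Set.Iic x, p (x - y) * f y)
        = (1 / (2 * α)) * Real.exp (-x / α) * A x := by
      rw [hA]
      rw [← MeasureTheory.integral_const_mul]
      apply MeasureTheory.setIntegral_congr_fun measurableSet_Iic
      intro y hy
      simp only [Set.mem_Iic] at hy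
      show p (x - y) * f y = (1 / (2 * α)) * Real.exp (-x / α) * g₁ y
      rw [hp, abs_of_nonneg (by linarith : (0:ℝ) ≤ x - y), hg₁]
      have h3 : -(x - y) / α = -x / α + y / α := by ring
      rw [h3, Real.exp_add]
      ring
    have h₂ : (∫ y in Set.Ioi x, p (x - y) * f y)
        = (1 / (2 * α)) * Real.exp (x / α) * B x := by
      rw [hB]
      rw [← MeasureTheory.integral_const_mul]
      apply MeasureTheory.setIntegral_congr_fun measurableSet_Ioi
      intro y hy
      simp only [Set.mem_Ioi] at hy
      show p (x - y) * f y = (1 / (2 * α)) * Real.exp (x / α) * g₂ y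
      rw [hp, abs_of_nonpos (by linarith : x - y ≤ 0), hg₂]
      have h3 : -(-(x - y)) / α = x / α + -y / α := by ring
      rw [h3, Real.exp_add]
      ring
    rw [hv, hsplit, h₁, h₂]
    ring
  -- first derivative
  set v₁ : ℝ → ℝ := fun x => (1 / (2 * α ^ 2)) *
      (- Real.exp (-x / α) * A x + Real.exp (x / α) * B x) with hv₁
  have hexp₁ : ∀ x : ℝ, HasDerivAt (fun z : ℝ => Real.exp (-z / α)) (-(1/α) * Real.exp (-x / α)) x := by
    intro x
    have h : HasDerivAt (fun z : ℝ => -z / α) (-(1/α)) x := by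
      simpa [neg_div, one_div] using ((hasDerivAt_id x).neg.div_const α)
    simpa [mul_comm] using h.exp
  have hexp₂ : ∀ x : ℝ, HasDerivAt (fun z : ℝ => Real.exp (z / α)) ((1/α) * Real.exp (x / α)) x := by
    intro x
    have h : HasDerivAt (fun z : ℝ => z / α) (1/α) x := by
      simpa [one_div] using ((hasDerivAt_id x).div_const α)
    simpa [mul_comm] using h.exp
  have key : ∀ x : ℝ, Real.exp (-x / α) * Real.exp (x / α) = 1 := by
    intro x
    rw [← Real.exp_add]
    simp [neg_div]
  have hvd : ∀ x : ℝ, HasDerivAt v (v₁ x) x := by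
    intro x
    have h : HasDerivAt (fun z => (1 / (2 * α)) *
        (Real.exp (-z / α) * A z + Real.exp (z / α) * B z))
        ((1 / (2 * α)) * ((-(1/α) * Real.exp (-x / α) * A x + Real.exp (-x / α) * g₁ x)
          + ((1/α) * Real.exp (x / α) * B x + Real.exp (x / α) * (-g₂ x)))) x :=
      (((hexp₁ x).mul (hAd x)).add ((hexp₂ x).mul (hBd x))).const_mul _
    have heq : (1 / (2 * α)) * ((-(1/α) * Real.exp (-x / α) * A x + Real.exp (-x / α) * g₁ x)
          + ((1/α) * Real.exp (x / α) * B x + Real.exp (x / α) * (-g₂ x))) = v₁ x := by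
      rw [hv₁, hg₁, hg₂]
      have k1 : Real.exp (-x / α) * (Real.exp (x / α) * f x) = f x := by
        rw [← mul_assoc, key x, one_mul]
      have k2 : Real.exp (x / α) * (Real.exp (-x / α) * f x) = f x := by
        rw [← mul_assoc, mul_comm (Real.exp (x/α)), key x, one_mul]
      simp only [mul_neg, neg_mul, neg_neg]
      rw [k1, k2]
      field_simp
      ring
    have h' := heq ▸ h
    exact h'.congr_of_eventuallyEq (Filter.Eventually.of_forall hveq)
  -- second derivative
  have hv₁d : ∀ x : ℝ, HasDerivAt v₁ (α⁻¹ ^ 2 * (v x - f x)) x := by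
    intro x
    have h : HasDerivAt v₁
        ((1 / (2 * α ^ 2)) * ((-(-(1/α) * Real.exp (-x / α)) * A x + (- Real.exp (-x / α)) * g₁ x)
          + ((1/α) * Real.exp (x / α) * B x + Real.exp (x / α) * (-g₂ x)))) x :=
      ((((hexp₁ x).neg.mul (hAd x)).add ((hexp₂ x).mul (hBd x))).const_mul _)
    have heq : ((1 / (2 * α ^ 2)) * ((-(-(1/α) * Real.exp (-x / α)) * A x + (- Real.exp (-x / α)) * g₁ x)
          + ((1/α) * Real.exp (x / α) * B x + Real.exp (x / α) * (-g₂ x))))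
        = α⁻¹ ^ 2 * (v x - f x) := by
      rw [hveq x, hg₁, hg₂]
      have k1 : Real.exp (-x / α) * (Real.exp (x / α) * f x) = f x := by
        rw [← mul_assoc, key x, one_mul]
      have k2 : Real.exp (x / α) * (Real.exp (-x / α) * f x) = f x := by
        rw [← mul_assoc, mul_comm (Real.exp (x/α)), key x, one_mul]
      simp only [mul_neg, neg_mul, neg_neg]
      rw [k1, k2]
      field_simp
      ring
    exact heq ▸ h
  have hderiv : deriv v = v₁ := funext fun x => (hvd x).deriv
  have hderiv2 : ∀ x, deriv (deriv v) x = α⁻¹ ^ 2 * (v x - f x) := by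
    intro x
    rw [hderiv]
    exact (hv₁d x).deriv
  refine ⟨fun x => (hvd x).differentiableAt, fun x => ?_, fun x => ?_, hderiv2⟩
  · rw [hderiv]; exact (hv₁d x).differentiableAt
  · rw [hderiv2 x]
    field_simp
    ring
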